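/- Let S₀ ⊆ ℂ be a finite nonempty set all of whose elements have modulus 1, let D = conv(S₀) ⊆ ℂ (real convex hull), let H be a complex m×n matrix and y ∈ ℂᵐ. Then there exists ρ₀ > 0 such that for every ρ > ρ₀, the set of global minimizers of x ↦ (1/2)‖y − Hx‖² − ρ‖x‖² over the product Dⁿ ⊆ ℂⁿ coincides with the set of global minimizers of x ↦ (1/2)‖y − Hx‖² over the discrete set S₀ⁿ. -/

import Mathlib

open scoped InnerProductSpace

lemma combo_sq {E : Type*} [NormedAddCommGroup E] [InnerProductSpace ℂ E] (a b : E) (t : ℝ) :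
    ‖(t : ℂ) • a + ((1 - t : ℝ) : ℂ) • b‖ ^ 2 =
      t * ‖a‖ ^ 2 + (1 - t) * ‖b‖ ^ 2 - t * (1 - t) * ‖a - b‖ ^ 2 := by
  have h1 := norm_add_sq (𝕜 := ℂ) ((t : ℂ) • a) (((1 - t : ℝ) : ℂ) • b)
  have h2 := norm_sub_sq (𝕜 := ℂ) a b
  have ha : ‖(t : ℂ) • a‖ ^ 2 = t ^ 2 * ‖a‖ ^ 2 := by
    rw [norm_smul, Complex.norm_real, Real.norm_eq_abs, mul_pow, sq_abs]
  have hb : ‖((1 - t : ℝ) : ℂ) • b‖ ^ 2 = (1 - t) ^ 2 * ‖b‖ ^ 2 := by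
    rw [norm_smul, Complex.norm_real, Real.norm_eq_abs, mul_pow, sq_abs]
  have hi : RCLike.re ⟪(t : ℂ) • a, ((1 - t : ℝ) : ℂ) • b⟫_ℂ
      = t * (1 - t) * RCLike.re ⟪a, b⟫_ℂ := by
    rw [inner_smul_left, inner_smul_right, Complex.conj_ofReal, ← mul_assoc,
      ← Complex.ofReal_mul]
    simp [RCLike.re_to_complex, Complex.re_ofReal_mul]
  rw [ha, hb, hi] at h1
  rw [h1, h2]; ring

lemma g_combo {E F : Type*} [NormedAddCommGroup E] [InnerProductSpace ℂ E]
    [NormedAddCommGroup F] [InnerProductSpace ℂ F]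
    (L : E →ₗ[ℂ] F) (y : F) (ρ t : ℝ) (u v : E) :
    1 / 2 * ‖y - L ((t : ℂ) • u + ((1 - t : ℝ) : ℂ) • v)‖ ^ 2
        - ρ * ‖(t : ℂ) • u + ((1 - t : ℝ) : ℂ) • v‖ ^ 2
      = t * (1 / 2 * ‖y - L u‖ ^ 2 - ρ * ‖u‖ ^ 2)
        + (1 - t) * (1 / 2 * ‖y - L v‖ ^ 2 - ρ * ‖v‖ ^ 2)
        + t * (1 - t) * (ρ * ‖u - v‖ ^ 2 - 1 / 2 * ‖L (u - v)‖ ^ 2) := by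
  have hy : y - L ((t : ℂ) • u + ((1 - t : ℝ) : ℂ) • v)
      = (t : ℂ) • (y - L u) + ((1 - t : ℝ) : ℂ) • (y - L v) := by
    have h1 : (t : ℂ) • y + ((1 - t : ℝ) : ℂ) • y = y := by
      rw [← add_smul]; norm_num
    rw [map_add, map_smul, map_smul, smul_sub, smul_sub, ← h1]
    module
  have hd : (y - L u) - (y - L v) = -(L (u - v)) := by
    rw [map_sub]; abel
  rw [hy, combo_sq, combo_sq, hd, norm_neg]
  ring

theorem stmt11 {m n : ℕ} (S₀ : Set ℂ) (hfin : S₀.Finite) (hne : S₀.Nonempty)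
    (hmod : ∀ s ∈ S₀, ‖s‖ = 1)
    (H : Matrix (Fin m) (Fin n) ℂ) (y : EuclideanSpace ℂ (Fin m)) :
    ∃ ρ₀ : ℝ, 0 < ρ₀ ∧ ∀ ρ : ℝ, ρ₀ < ρ →
      {x : EuclideanSpace ℂ (Fin n) | (∀ i, x i ∈ convexHull ℝ S₀) ∧
        ∀ z : EuclideanSpace ℂ (Fin n), (∀ i, z i ∈ convexHull ℝ S₀) →
          1 / 2 * ‖y - Matrix.toEuclideanLin H x‖ ^ 2 - ρ * ‖x‖ ^ 2 ≤
            1 / 2 * ‖y - Matrix.toEuclideanLin H z‖ ^ 2 - ρ * ‖z‖ ^ 2} =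
      {x : EuclideanSpace ℂ (Fin n) | (∀ i, x i ∈ S₀) ∧
        ∀ z : EuclideanSpace ℂ (Fin n), (∀ i, z i ∈ S₀) →
          1 / 2 * ‖y - Matrix.toEuclideanLin H x‖ ^ 2 ≤
            1 / 2 * ‖y - Matrix.toEuclideanLin H z‖ ^ 2} := by
  classical
  have hex : ∃ C : ℝ, 0 ≤ C ∧
      ∀ d : EuclideanSpace ℂ (Fin n), ‖Matrix.toEuclideanLin H d‖ ≤ C * ‖d‖ := by
    refine ⟨‖LinearMap.toContinuousLinearMap (Matrix.toEuclideanLin H)‖, norm_nonneg _,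
      fun d => ?_⟩
    simpa using (LinearMap.toContinuousLinearMap (Matrix.toEuclideanLin H)).le_opNorm d
  obtain ⟨C, hC0, hC⟩ := hex
  refine ⟨C ^ 2 / 2 + 1, by positivity, fun ρ hρ => ?_⟩
  set L := Matrix.toEuclideanLin H with hLdef
  clear_value L
  set D := convexHull ℝ S₀ with hDdef
  have hbound : ∀ d : EuclideanSpace ℂ (Fin n), ‖L d‖ ≤ C * ‖d‖ := hC
  have hsq : ∀ d : EuclideanSpace ℂ (Fin n),
      ‖L d‖ * ‖L d‖ ≤ (C * ‖d‖) * (C * ‖d‖) := fun d =>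
    mul_le_mul (hbound d) (hbound d) (norm_nonneg _)
      (mul_nonneg hC0 (norm_nonneg _))
  have hnonneg : ∀ d : EuclideanSpace ℂ (Fin n),
      0 ≤ ρ * ‖d‖ ^ 2 - 1 / 2 * ‖L d‖ ^ 2 := by
    intro d
    nlinarith [hsq d, sq_nonneg ‖d‖, norm_nonneg (L d)]
  have hpos : ∀ d : EuclideanSpace ℂ (Fin n), d ≠ 0 →
      0 < ρ * ‖d‖ ^ 2 - 1 / 2 * ‖L d‖ ^ 2 := by
    intro d hd
    have hd2 : 0 < ‖d‖ ^ 2 := by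
      have := norm_pos_iff.mpr hd
      positivity
    nlinarith [hsq d]
  -- norm squared is constant on S₀ⁿ
  have hnormS : ∀ x : EuclideanSpace ℂ (Fin n), (∀ i, x i ∈ S₀) → ‖x‖ ^ 2 = n := by
    intro x hx
    have h1 : ‖x‖ ^ 2 = ∑ i, ‖x i‖ ^ 2 := by
      rw [EuclideanSpace.norm_eq, Real.sq_sqrt (by positivity)]
    have h2 : ∀ i, ‖x i‖ ^ 2 = 1 := by
      intro i
      rw [hmod _ (hx i)]; norm_num
    rw [h1, Finset.sum_congr rfl fun i _ => h2 i]
    simp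
  -- concavity of the penalized objective
  have hconc : ConcaveOn ℝ Set.univ
      (fun x : EuclideanSpace ℂ (Fin n) => 1 / 2 * ‖y - L x‖ ^ 2 - ρ * ‖x‖ ^ 2) := by
    refine ⟨convex_univ, ?_⟩
    intro u _ v _ p q hp hq hpq
    have hq1 : q = 1 - p := by linarith
    subst hq1
    have hs : ∀ (r : ℝ) (w : EuclideanSpace ℂ (Fin n)), r • w = (r : ℂ) • w := by
      intro r w
      ext j
      simp [PiLp.smul_apply, Complex.real_smul]
    simp only [smul_eq_mul]
    rw [hs p u, hs (1 - p) v, g_combo]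
    have h0 := mul_nonneg (mul_nonneg hp hq) (hnonneg (u - v))
    linarith
  -- membership in the convex hull of S₀ⁿ
  have hhull : ∀ z : EuclideanSpace ℂ (Fin n), (∀ i, z i ∈ D) →
      z ∈ convexHull ℝ {x : EuclideanSpace ℂ (Fin n) | ∀ i, x i ∈ S₀} := by
    intro z hz
    have h1 : z.ofLp ∈ convexHull ℝ (Set.univ.pi fun _ : Fin n => S₀) :=
      mem_convexHull_pi (fun i _ => hz i)
    have h2 : (Set.univ.pi fun _ : Fin n => S₀)
        = {x : Fin n → ℂ | ∀ i, x i ∈ S₀} := by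
      ext w; simp [Set.mem_pi]
    rw [h2] at h1
    have h4 := LinearMap.image_convexHull
      (WithLp.linearEquiv 2 ℝ (Fin n → ℂ)).symm.toLinearMap {x : Fin n → ℂ | ∀ i, x i ∈ S₀}
    have h5 : z ∈ ⇑(WithLp.linearEquiv 2 ℝ (Fin n → ℂ)).symm.toLinearMap ''
        convexHull ℝ {x : Fin n → ℂ | ∀ i, x i ∈ S₀} := ⟨z.ofLp, h1, rfl⟩
    rw [h4] at h5
    convert h5 using 2
    ext w
    constructor
    · intro hw; exact ⟨w.ofLp, hw, rfl⟩
    · rintro ⟨w', hw', rfl⟩; exact hw'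
  have hmin_exists : ∀ z : EuclideanSpace ℂ (Fin n), (∀ i, z i ∈ D) →
      ∃ w : EuclideanSpace ℂ (Fin n), (∀ i, w i ∈ S₀) ∧
        1 / 2 * ‖y - L w‖ ^ 2 - ρ * ‖w‖ ^ 2 ≤ 1 / 2 * ‖y - L z‖ ^ 2 - ρ * ‖z‖ ^ 2 := by
    intro z hz
    obtain ⟨w, hw, hle⟩ := hconc.exists_le_of_mem_convexHull
      (Set.subset_univ _) (hhull z hz)
    exact ⟨w, hw, hle⟩
  -- any minimizer of the penalized problem has all coordinates in S₀
  have hstep : ∀ x : EuclideanSpace ℂ (Fin n), (∀ i, x i ∈ D) →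
      (∀ z : EuclideanSpace ℂ (Fin n), (∀ i, z i ∈ D) →
        1 / 2 * ‖y - L x‖ ^ 2 - ρ * ‖x‖ ^ 2 ≤ 1 / 2 * ‖y - L z‖ ^ 2 - ρ * ‖z‖ ^ 2) →
      ∀ i, x i ∈ S₀ := by
    intro x hxD hxmin i
    by_contra hxi
    have hnotext : x i ∉ (convexHull ℝ S₀).extremePoints ℝ := fun h =>
      hxi (extremePoints_convexHull_subset h)
    rw [mem_extremePoints] at hnotext
    push_neg at hnotext
    obtain ⟨a, ha, b, hb, hseg, hab⟩ := hnotext (hxD i)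
    obtain ⟨ta, tb, hta, htb, htab, hteq⟩ := hseg
    have htb' : tb = 1 - ta := by linarith
    have haneb : a ≠ b := by
      rintro rfl
      rw [← add_smul, htab, one_smul] at hteq
      exact hab hteq hteq
    set u : EuclideanSpace ℂ (Fin n) := WithLp.toLp 2 (fun j => if j = i then a else x j) with hu
    set v : EuclideanSpace ℂ (Fin n) := WithLp.toLp 2 (fun j => if j = i then b else x j) with hv
    have huD : ∀ j, u j ∈ D := by
      intro j
      have he : u j = if j = i then a else x j := rfl
      rw [he]
      by_cases h : j = i
      · rw [if_pos h]; exact ha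
      · rw [if_neg h]; exact hxD j
    have hvD : ∀ j, v j ∈ D := by
      intro j
      have he : v j = if j = i then b else x j := rfl
      rw [he]
      by_cases h : j = i
      · rw [if_pos h]; exact hb
      · rw [if_neg h]; exact hxD j
    have huv : u ≠ v := by
      intro h
      apply haneb
      have := congrFun (congrArg WithLp.ofLp h) i
      simpa [hu, hv] using this
    have hxuv : x = (ta : ℂ) • u + ((1 - ta : ℝ) : ℂ) • v := by
      ext j
      by_cases h : j = i
      · subst h
        simp only [PiLp.add_apply, PiLp.smul_apply, hu, hv, PiLp.toLp_apply, if_pos rfl, smul_eq_mul]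
        rw [← hteq, htb']
        simp [Complex.real_smul]
      · simp only [PiLp.add_apply, PiLp.smul_apply, hu, hv, PiLp.toLp_apply, if_neg h, smul_eq_mul]
        have hta2 : ta + (1 - ta) = 1 := by ring
        rw [← add_mul, ← Complex.ofReal_add, hta2, Complex.ofReal_one, one_mul]
    have hgap := g_combo L y ρ ta u v
    rw [← hxuv] at hgap
    have h1 := hxmin u huD
    have h2 := hxmin v hvD
    have h3 : 0 < ρ * ‖u - v‖ ^ 2 - 1 / 2 * ‖L (u - v)‖ ^ 2 :=
      hpos (u - v) (sub_ne_zero.mpr huv)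
    have hta1 : (0:ℝ) < 1 - ta := by linarith
    have h4 := mul_le_mul_of_nonneg_left h1 (le_of_lt hta)
    have h5 := mul_le_mul_of_nonneg_left h2 (le_of_lt hta1)
    have h6 := mul_pos (mul_pos hta hta1) h3
    linarith
  -- final set equality
  ext x
  simp only [Set.mem_setOf_eq]
  constructor
  · rintro ⟨hxD, hxmin⟩
    have hxS : ∀ i, x i ∈ S₀ := hstep x hxD hxmin
    refine ⟨hxS, fun z hz => ?_⟩
    have hzD : ∀ i, z i ∈ D := fun i => subset_convexHull ℝ S₀ (hz i)
    have h0 := hxmin z hzD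
    have h1 := hnormS x hxS
    have h2 := hnormS z hz
    rw [h1, h2] at h0
    linarith
  · rintro ⟨hxS, hxmin⟩
    have hxD : ∀ i, x i ∈ D := fun i => subset_convexHull ℝ S₀ (hxS i)
    refine ⟨hxD, fun z hzD => ?_⟩
    obtain ⟨w, hwS, hwle⟩ := hmin_exists z hzD
    have h1 := hnormS x hxS
    have h2 := hnormS w hwS
    have h3 := hxmin w hwS
    rw [h2] at hwle
    rw [h1]
    linarith
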